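/- Let π₁ and π₂ be probability measures on measurable spaces (X₁, ℱ₁) and (X₂, ℱ₂). For each N ∈ ℕ, let (x¹_{N,i}, w̄¹_{N,i})_{i=1}^{N} and (x²_{N,j}, w̄²_{N,j})_{j=1}^{N} be two random weighted particle systems on a common probability space, taking values in X₁ and X₂ respectively, such that the weights are nonnegative and sum to one (Σ_i w̄¹_{N,i} = 1 and Σ_j w̄²_{N,j} = 1 almost surely), the two systems are independent of each other for each N, and for every A ∈ ℱ₁ the random variable Σ_{i=1}^{N} w̄¹_{N,i} 1_A(x¹_{N,i}) converges in probability to π₁(A) as N → ∞, and likewise for every A ∈ ℱ₂, Σ_{j=1}^{N} w̄²_{N,j} 1_A(x²_{N,j}) converges in probability to π₂(A). Then for every bounded ℱ₁ ⊗ ℱ₂-measurable function f : X₁ × X₂ → ℝ, the random variable Σ_{i=1}^{N} Σ_{j=1}^{N} w̄¹_{N,i} w̄²_{N,j} f(x¹_{N,i}, x²_{N,j}) converges in probability to ∫ f d(π₁ ⊗ π₂) as N → ∞. -/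

import Mathlib

open MeasureTheory ProbabilityTheory Filter
open scoped Topology ENNReal

namespace DCSMC

variable {Ω : Type*} [MeasurableSpace Ω] {P : Measure Ω}


variable {Ω : Type*} [MeasurableSpace Ω] {P : Measure Ω}

lemma tim_const (c : ℝ) : TendstoInMeasure P (fun (_ : ℕ) (_ : Ω) => c) atTop (fun _ => c) := by
  rw [tendstoInMeasure_iff_dist]
  intro ε hε
  have h0 : {ω : Ω | ε ≤ dist c c} = ∅ := by
    ext ω; simp only [Set.mem_setOf_eq, dist_self, Set.mem_empty_iff_false, iff_false, not_le]
    linarith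
  simp only [h0, measure_empty]
  exact tendsto_const_nhds

lemma tim_add {u v : ℕ → Ω → ℝ} {a b : ℝ}
    (hu : TendstoInMeasure P u atTop fun _ => a)
    (hv : TendstoInMeasure P v atTop fun _ => b) :
    TendstoInMeasure P (fun n ω => u n ω + v n ω) atTop (fun _ => a + b) := by
  rw [tendstoInMeasure_iff_dist] at *
  intro ε hε
  have hε2 : 0 < ε / 2 := by linarith
  refine tendsto_of_tendsto_of_tendsto_of_le_of_le tendsto_const_nhds
    (by simpa using (hu _ hε2).add (hv _ hε2)) (fun n => zero_le) (fun n => ?_)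
  refine (measure_mono ?_).trans (measure_union_le _ _)
  intro ω hω
  simp only [Set.mem_setOf_eq] at hω
  simp only [Set.mem_union, Set.mem_setOf_eq]
  by_contra h
  push_neg at h
  have hd := dist_add_add_le (u n ω) (v n ω) a b
  linarith [h.1, h.2]

lemma tim_const_mul (r : ℝ) {u : ℕ → Ω → ℝ} {a : ℝ}
    (hu : TendstoInMeasure P u atTop fun _ => a) :
    TendstoInMeasure P (fun n ω => r * u n ω) atTop (fun _ => r * a) := by
  rw [tendstoInMeasure_iff_dist] at *
  intro ε hε
  have hpos : 0 < ε / (|r| + 1) := by positivity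
  refine tendsto_of_tendsto_of_tendsto_of_le_of_le tendsto_const_nhds (hu _ hpos)
    (fun n => zero_le) (fun n => measure_mono ?_)
  intro ω hω
  simp only [Set.mem_setOf_eq] at hω ⊢
  have habs : dist (r * u n ω) (r * a) = |r| * dist (u n ω) a := by
    simp [Real.dist_eq, ← mul_sub, abs_mul]
  have hd : (0:ℝ) ≤ dist (u n ω) a := dist_nonneg
  rw [div_le_iff₀ (by positivity)]
  nlinarith [abs_nonneg r]

lemma tim_sum {κ : Type*} (s : Finset κ) (F : κ → ℕ → Ω → ℝ) (c : κ → ℝ)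
    (h : ∀ k ∈ s, TendstoInMeasure P (F k) atTop fun _ => c k) :
    TendstoInMeasure P (fun n ω => ∑ k ∈ s, F k n ω) atTop (fun _ => ∑ k ∈ s, c k) := by
  classical
  induction s using Finset.induction_on with
  | empty => simpa using tim_const (P := P) 0
  | @insert a s ha ih =>
      simp only [Finset.sum_insert ha]
      exact tim_add (h a (Finset.mem_insert_self a s))
        (ih fun k hk => h k (Finset.mem_insert_of_mem hk))

lemma tim_approx {u : ℕ → Ω → ℝ} {c : ℝ}
    (h : ∀ δ : ℝ, 0 < δ → ∃ (v : ℕ → Ω → ℝ) (d : ℝ),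
      TendstoInMeasure P v atTop (fun _ => d) ∧ (∀ n, ∀ᵐ ω ∂P, |u n ω - v n ω| ≤ δ)
        ∧ |c - d| ≤ δ) :
    TendstoInMeasure P u atTop (fun _ => c) := by
  rw [tendstoInMeasure_iff_dist]
  intro ε hε
  obtain ⟨v, d, hv, hclose, hcd⟩ := h (ε/3) (by linarith)
  refine tendsto_of_tendsto_of_tendsto_of_le_of_le tendsto_const_nhds (tendstoInMeasure_iff_dist.mp hv (ε/3) (by linarith))
    (fun n => zero_le) (fun n => ?_)
  refine measure_mono_ae ?_
  filter_upwards [hclose n] with ω hω hmem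
  have hmem' : ε ≤ dist (u n ω) c := hmem
  show ε / 3 ≤ dist (v n ω) d
  rw [Real.dist_eq] at hmem' ⊢
  have k1 := abs_sub_le (u n ω) (v n ω) c
  have k2 := abs_sub_le (v n ω) d c
  have k3 : |d - c| = |c - d| := abs_sub_comm _ _
  linarith [hmem']

lemma tim_of_integral_abs {F : ℕ → Ω → ℝ}
    (hint : ∀ n, Integrable (F n) P)
    (h : Tendsto (fun n => ∫ ω, |F n ω| ∂P) atTop (𝓝 0)) :
    TendstoInMeasure P F atTop (fun _ => (0:ℝ)) := by
  rw [tendstoInMeasure_iff_dist]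
  intro ε hε
  have hne : ENNReal.ofReal ε ≠ 0 := by
    simp only [ne_eq, ENNReal.ofReal_eq_zero, not_le]; exact hε
  have hb : ∀ n, P {ω | ε ≤ dist (F n ω) 0}
      ≤ ENNReal.ofReal (∫ ω, |F n ω| ∂P) * (ENNReal.ofReal ε)⁻¹ := by
    intro n
    have hmeas : AEMeasurable (fun ω => ENNReal.ofReal |F n ω|) P :=
      ENNReal.measurable_ofReal.comp_aemeasurable (hint n).abs.aemeasurable
    have hset : {ω | ε ≤ dist (F n ω) 0}
        = {ω | ENNReal.ofReal ε ≤ ENNReal.ofReal |F n ω|} := by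
      ext ω
      simp only [Set.mem_setOf_eq, Real.dist_0_eq_abs,
        ENNReal.ofReal_le_ofReal_iff (abs_nonneg _)]
    rw [hset]
    calc P {ω | ENNReal.ofReal ε ≤ ENNReal.ofReal |F n ω|}
        ≤ (∫⁻ ω, ENNReal.ofReal |F n ω| ∂P) / ENNReal.ofReal ε :=
          meas_ge_le_lintegral_div hmeas hne ENNReal.ofReal_ne_top
      _ = ENNReal.ofReal (∫ ω, |F n ω| ∂P) * (ENNReal.ofReal ε)⁻¹ := by
          rw [ofReal_integral_eq_lintegral_ofReal (hint n).abs
            (Filter.Eventually.of_forall fun ω => abs_nonneg _), ENNReal.div_eq_inv_mul,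
            mul_comm]
  refine tendsto_of_tendsto_of_tendsto_of_le_of_le tendsto_const_nhds ?_
    (fun n => zero_le) hb
  have h1 : Tendsto (fun n => ENNReal.ofReal (∫ ω, |F n ω| ∂P)) atTop (𝓝 0) := by
    simpa using ENNReal.tendsto_ofReal h
  simpa using ENNReal.Tendsto.mul_const h1 (Or.inr (ENNReal.inv_ne_top.mpr hne))

lemma integral_abs_tendsto_zero [IsFiniteMeasure P] {F : ℕ → Ω → ℝ} {c C' : ℝ}
    (hm : ∀ n, AEStronglyMeasurable (F n) P)
    (hb : ∀ n, ∀ᵐ ω ∂P, |F n ω| ≤ C')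
    (h : TendstoInMeasure P F atTop fun _ => c) :
    Tendsto (fun n => ∫ ω, |F n ω - c| ∂P) atTop (𝓝 0) := by
  apply tendsto_of_subseq_tendsto
  intro ns hns
  have hsub : TendstoInMeasure P (fun k => F (ns k)) atTop fun _ => c :=
    fun ε hε => (h ε hε).comp hns
  obtain ⟨ms, _, hae⟩ := hsub.exists_seq_tendsto_ae
  refine ⟨ms, ?_⟩
  have hDCT := tendsto_integral_of_dominated_convergence (μ := P)
      (F := fun k ω => |F (ns (ms k)) ω - c|) (f := fun _ => (0:ℝ))
      (bound := fun _ => C' + |c|)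
      (fun k => by
        simpa only [Real.norm_eq_abs, Pi.sub_apply] using ((hm _).sub aestronglyMeasurable_const).norm)
      (integrable_const _)
      (fun k => by
        filter_upwards [hb (ns (ms k))] with ω hω
        have := abs_sub_le (F (ns (ms k)) ω) 0 c
        simp only [sub_zero, zero_sub, abs_neg] at this
        simp only [Real.norm_eq_abs, abs_abs]
        linarith)
      (by
        filter_upwards [hae] with ω hω
        have := (hω.sub (tendsto_const_nhds (x := c))).abs
        simpa using this)
  simpa using hDCT

lemma integral_tendsto_of_tim [IsProbabilityMeasure P] {F : ℕ → Ω → ℝ} {c C' : ℝ}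
    (hm : ∀ n, AEStronglyMeasurable (F n) P)
    (hb : ∀ n, ∀ᵐ ω ∂P, |F n ω| ≤ C')
    (h : TendstoInMeasure P F atTop fun _ => c) :
    Tendsto (fun n => ∫ ω, F n ω ∂P) atTop (𝓝 c) := by
  have hint : ∀ n, Integrable (F n) P := fun n =>
    (integrable_const C').mono' (hm n)
      (by filter_upwards [hb n] with ω hω; simpa [Real.norm_eq_abs] using hω)
  rw [tendsto_iff_dist_tendsto_zero]
  refine squeeze_zero (fun n => dist_nonneg) (fun n => ?_)
    (integral_abs_tendsto_zero hm hb h)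
  rw [Real.dist_eq]
  calc |∫ ω, F n ω ∂P - c| = |∫ ω, (F n ω - c) ∂P| := by
        rw [integral_sub (hint n) (integrable_const c)]; simp [measure_univ]
    _ ≤ ∫ ω, |F n ω - c| ∂P := by
        simpa [Real.norm_eq_abs] using
          norm_integral_le_integral_norm (μ := P) (fun ω => F n ω - c)




/-- Independence Fubini: the expectation of a bounded jointly measurable functional of two
independent random elements can be computed by integrating the two arguments separately. -/
lemma fubini_swap {α β : Type*} [MeasurableSpace α] [MeasurableSpace β]
    (P : Measure Ω) [IsProbabilityMeasure P]
    {Y : Ω → α} {Z : Ω → β} (hY : Measurable Y) (hZ : Measurable Z)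
    (hind : IndepFun Y Z P) {G : α → β → ℝ}
    (hGm : Measurable (fun q : α × β => G q.1 q.2))
    {M : ℝ} (hGb : ∀ y z, |G y z| ≤ M) :
    ∫ ω, G (Y ω) (Z ω) ∂P = ∫ ω, (∫ ω', G (Y ω) (Z ω') ∂P) ∂P := by
  have hmap : P.map (fun ω => (Y ω, Z ω)) = (P.map Y).prod (P.map Z) :=
    (ProbabilityTheory.indepFun_iff_map_prod_eq_prod_map_map hY.aemeasurable
      hZ.aemeasurable).mp hind
  haveI : IsProbabilityMeasure (P.map Y) := Measure.isProbabilityMeasure_map hY.aemeasurable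
  haveI : IsProbabilityMeasure (P.map Z) := Measure.isProbabilityMeasure_map hZ.aemeasurable
  have hGint : Integrable (fun q : α × β => G q.1 q.2) ((P.map Y).prod (P.map Z)) :=
    (integrable_const M).mono' hGm.aestronglyMeasurable
      (Filter.Eventually.of_forall fun q => by
        simpa [Real.norm_eq_abs] using hGb q.1 q.2)
  calc ∫ ω, G (Y ω) (Z ω) ∂P
      = ∫ q : α × β, G q.1 q.2 ∂(P.map (fun ω => (Y ω, Z ω))) := by
        rw [integral_map (hY.prodMk hZ).aemeasurable hGm.aestronglyMeasurable]
    _ = ∫ q : α × β, G q.1 q.2 ∂((P.map Y).prod (P.map Z)) := by rw [hmap]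
    _ = ∫ y, ∫ z, G y z ∂(P.map Z) ∂(P.map Y) := integral_prod _ hGint
    _ = ∫ y, ∫ ω', G y (Z ω') ∂P ∂(P.map Y) := by
        refine integral_congr_ae (Filter.Eventually.of_forall fun y => ?_)
        show ∫ z, G y z ∂(P.map Z) = ∫ ω', G y (Z ω') ∂P
        have hm : Measurable fun z => G y z := hGm.comp measurable_prodMk_left
        rw [integral_map hZ.aemeasurable hm.aestronglyMeasurable]
    _ = ∫ ω, ∫ ω', G (Y ω) (Z ω') ∂P ∂P := by
        have hm : StronglyMeasurable fun y => ∫ ω', G y (Z ω') ∂P :=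
          (hGm.comp (measurable_fst.prodMk
            (hZ.comp measurable_snd))).stronglyMeasurable.integral_prod_right'
        rw [integral_map hY.aemeasurable hm.aestronglyMeasurable]

/-- Step A: a consistent particle system integrates every bounded measurable function. -/
lemma weighted_tendsto {X : Type*} [MeasurableSpace X] (π : Measure X) [IsProbabilityMeasure π]
    (P : Measure Ω) [IsProbabilityMeasure P]
    (x : (N : ℕ) → Fin N → Ω → X) (w : (N : ℕ) → Fin N → Ω → ℝ)
    (hw_sum : ∀ N, ∀ᵐ ω ∂P, (∀ i, 0 ≤ w N i ω) ∧ ∑ i, w N i ω = 1)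
    (hcons : ∀ A : Set X, MeasurableSet A →
      TendstoInMeasure P (fun N ω => ∑ i, w N i ω * Set.indicator A (fun _ => (1:ℝ)) (x N i ω))
        atTop (fun _ => (π A).toReal))
    (g : X → ℝ) (hg : Measurable g) (C : ℝ) (hC : 0 ≤ C) (hgb : ∀ a, |g a| ≤ C) :
    TendstoInMeasure P (fun N ω => ∑ i, w N i ω * g (x N i ω)) atTop
      (fun _ => ∫ a, g a ∂π) := by
  apply tim_approx
  intro δ hδ
  obtain ⟨n, hn⟩ := exists_nat_gt ((2*C+1)/δ)
  have hnpos : 0 < (n:ℝ) := lt_trans (by positivity) hn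
  set h : X → ℝ := fun a => (g a + C) / (2*C+1) with hh
  have hh01 : ∀ a, 0 ≤ h a ∧ h a < 1 := by
    intro a
    have h1 := abs_le.mp (hgb a)
    constructor
    · apply div_nonneg <;> linarith [h1.1]
    · rw [div_lt_one (by linarith)]; linarith [h1.2]
  set A : ℕ → Set X := fun k => {a | (k:ℝ)/n < h a} with hA
  have hhm : Measurable h := (hg.add_const C).div_const _
  have hAmeas : ∀ k, MeasurableSet (A k) := fun k =>
    measurableSet_lt measurable_const hhm
  set gd : X → ℝ := fun a =>
    (2*C+1) * ((n:ℝ)⁻¹ * ∑ k ∈ Finset.range n, Set.indicator (A k) (fun _ => (1:ℝ)) a) - C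
    with hgd
  -- sum of indicators equals the ceiling count
  have hsum_eq : ∀ a, ∑ k ∈ Finset.range n, Set.indicator (A k) (fun _ => (1:ℝ)) a
      = (⌈(n:ℝ) * h a⌉₊ : ℝ) := by
    intro a
    classical
    have hiff : ∀ k : ℕ, a ∈ A k ↔ k ∈ Finset.range ⌈(n:ℝ) * h a⌉₊ := by
      intro k
      simp only [hA, Set.mem_setOf_eq, Finset.mem_range, Nat.lt_ceil]
      rw [div_lt_iff₀ hnpos]
      constructor <;> intro hk <;> nlinarith [hk]
    have hle : ⌈(n:ℝ) * h a⌉₊ ≤ n := by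
      rw [Nat.ceil_le]
      nlinarith [(hh01 a).1, (hh01 a).2]
    calc ∑ k ∈ Finset.range n, Set.indicator (A k) (fun _ => (1:ℝ)) a
        = ∑ k ∈ Finset.range n, if k ∈ Finset.range ⌈(n:ℝ) * h a⌉₊ then (1:ℝ) else 0 := by
          refine Finset.sum_congr rfl fun k _ => ?_
          by_cases hk : a ∈ A k
          · rw [Set.indicator_of_mem hk, if_pos ((hiff k).mp hk)]
          · rw [Set.indicator_of_notMem hk, if_neg (fun hc => hk ((hiff k).mpr hc))]
      _ = ∑ k ∈ Finset.range n ∩ Finset.range ⌈(n:ℝ) * h a⌉₊, (1:ℝ) :=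
          Finset.sum_ite_mem _ _ _
      _ = (⌈(n:ℝ) * h a⌉₊ : ℝ) := by
          have hinter : Finset.range n ∩ Finset.range ⌈(n:ℝ) * h a⌉₊
              = Finset.range ⌈(n:ℝ) * h a⌉₊ := by
            ext k; simp only [Finset.mem_inter, Finset.mem_range]; omega
          rw [hinter]; simp
  have happrox : ∀ a, |g a - gd a| ≤ (2*C+1)/n := by
    intro a
    have hg_eq : g a = (2*C+1) * h a - C := by
      rw [hh]; field_simp; ring
    have h1 : h a ≤ (⌈(n:ℝ) * h a⌉₊ : ℝ) / n := by
      rw [le_div_iff₀ hnpos]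
      nlinarith [Nat.le_ceil ((n:ℝ) * h a)]
    have hinv : (1/(n:ℝ)) * n = 1 := by field_simp
    have h2 : (⌈(n:ℝ) * h a⌉₊ : ℝ) / n ≤ h a + 1/n := by
      rw [div_le_iff₀ hnpos]
      have hcl : (⌈(n:ℝ) * h a⌉₊ : ℝ) < (n:ℝ) * h a + 1 :=
        Nat.ceil_lt_add_one (by nlinarith [(hh01 a).1])
      nlinarith [hcl, hinv]
    have hgd_eq : gd a = (2*C+1) * ((⌈(n:ℝ) * h a⌉₊ : ℝ) / n) - C := by
      rw [hgd]; simp only [hsum_eq a]; ring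
    have m1 : (2*C+1) * ((⌈(n:ℝ) * h a⌉₊ : ℝ)/n - h a) ≤ (2*C+1) * (1/n) :=
      mul_le_mul_of_nonneg_left (by linarith) (by linarith)
    have m2 : (0:ℝ) ≤ (2*C+1) * ((⌈(n:ℝ) * h a⌉₊ : ℝ)/n - h a) :=
      mul_nonneg (by linarith) (by linarith)
    have e1 : (2*C+1) * ((⌈(n:ℝ) * h a⌉₊ : ℝ)/n - h a)
        = (2*C+1) * ((⌈(n:ℝ) * h a⌉₊ : ℝ)/n) - (2*C+1) * h a := by ring
    have e2 : (2*C+1) * (1/(n:ℝ)) = (2*C+1)/n := by ring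
    have e3 : (0:ℝ) ≤ (2*C+1)/n := div_nonneg (by linarith) hnpos.le
    rw [e1, e2] at m1
    rw [e1] at m2
    rw [hg_eq, hgd_eq, abs_le]
    constructor
    · linarith
    · linarith
  have hdn : (2*C+1)/n ≤ δ := by
    rw [div_le_iff₀ hnpos]
    rw [div_lt_iff₀ hδ] at hn
    nlinarith
  have hclose : ∀ a, |g a - gd a| ≤ δ := fun a => (happrox a).trans hdn
  -- the approximating particle sums
  refine ⟨fun N ω => ∑ i, w N i ω * gd (x N i ω),
    (2*C+1) * ((n:ℝ)⁻¹ * ∑ k ∈ Finset.range n, (π (A k)).toReal) - C, ?_, ?_, ?_⟩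
  · -- TendstoInMeasure of the simple-function sums
    have t1 := tim_sum (P := P) (Finset.range n)
      (fun k N ω => ∑ i, w N i ω * Set.indicator (A k) (fun _ => (1:ℝ)) (x N i ω))
      (fun k => (π (A k)).toReal) (fun k _ => hcons (A k) (hAmeas k))
    have t2 := tim_const_mul ((n:ℝ)⁻¹) t1
    have t3 := tim_const_mul (2*C+1) t2
    have t4 := tim_add t3 (tim_const (P := P) (-C))
    refine TendstoInMeasure.congr (fun N => ?_) ?_ t4
    · filter_upwards [hw_sum N] with ω hω
      have key : ∑ i, w N i ω * gd (x N i ω)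
          = (2*C+1) * ((n:ℝ)⁻¹ * ∑ k ∈ Finset.range n,
              ∑ i, w N i ω * Set.indicator (A k) (fun _ => (1:ℝ)) (x N i ω))
            - C * ∑ i, w N i ω := by
        calc ∑ i, w N i ω * gd (x N i ω)
            = ∑ i, ((2*C+1) * ((n:ℝ)⁻¹ * ∑ k ∈ Finset.range n,
                w N i ω * Set.indicator (A k) (fun _ => (1:ℝ)) (x N i ω)) - C * w N i ω) := by
              refine Finset.sum_congr rfl fun i _ => ?_
              simp only [hgd]
              rw [← Finset.mul_sum]
              ring
          _ = (2*C+1) * ((n:ℝ)⁻¹ * ∑ i, ∑ k ∈ Finset.range n,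
                w N i ω * Set.indicator (A k) (fun _ => (1:ℝ)) (x N i ω)) - C * ∑ i, w N i ω := by
              rw [Finset.sum_sub_distrib, ← Finset.mul_sum, ← Finset.mul_sum, ← Finset.mul_sum]
          _ = _ := by rw [Finset.sum_comm]
      rw [hω.2, mul_one] at key
      rw [key]
      ring
    · refine Filter.Eventually.of_forall fun ω => ?_
      ring
  · intro N
    filter_upwards [hw_sum N] with ω hω
    have e1 : ∑ i, w N i ω * g (x N i ω) - ∑ i, w N i ω * gd (x N i ω)
        = ∑ i, w N i ω * (g (x N i ω) - gd (x N i ω)) := by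
      rw [← Finset.sum_sub_distrib]
      exact Finset.sum_congr rfl fun i _ => by ring
    rw [e1]
    calc |∑ i, w N i ω * (g (x N i ω) - gd (x N i ω))|
        ≤ ∑ i, |w N i ω * (g (x N i ω) - gd (x N i ω))| :=
          Finset.abs_sum_le_sum_abs _ _
      _ ≤ ∑ i, w N i ω * δ := by
          refine Finset.sum_le_sum fun i _ => ?_
          rw [abs_mul, abs_of_nonneg (hω.1 i)]
          exact mul_le_mul_of_nonneg_left (hclose _) (hω.1 i)
      _ = δ := by rw [← Finset.sum_mul, hω.2, one_mul]
  · -- |∫ g − d| ≤ δ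
    have hIg : Integrable g π := (integrable_const C).mono' hg.aestronglyMeasurable
      (Filter.Eventually.of_forall fun a => by simpa [Real.norm_eq_abs] using hgb a)
    have hIind : ∀ k, Integrable (Set.indicator (A k) (fun _ => (1:ℝ))) π := fun k =>
      (integrable_const (1:ℝ)).indicator (hAmeas k)
    have hIsum : Integrable
        (fun a => ∑ k ∈ Finset.range n, Set.indicator (A k) (fun _ => (1:ℝ)) a) π :=
      integrable_finset_sum _ (fun k _ => hIind k)
    have hIgd : Integrable gd π := by
      rw [hgd]
      exact (((hIsum.const_mul _).const_mul _)).sub (integrable_const C)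
    have hint_gd : ∫ a, gd a ∂π
        = (2*C+1) * ((n:ℝ)⁻¹ * ∑ k ∈ Finset.range n, (π (A k)).toReal) - C := by
      rw [hgd]
      rw [integral_sub ((hIsum.const_mul _).const_mul _) (integrable_const C),
        integral_const, integral_const_mul, integral_const_mul,
        integral_finset_sum _ (fun k _ => hIind k)]
      have : ∀ k ∈ Finset.range n,
          ∫ a, Set.indicator (A k) (fun _ => (1:ℝ)) a ∂π = (π (A k)).toReal := by
        intro k _
        rw [integral_indicator_const (1:ℝ) (hAmeas k)]
        simp [measureReal_def]
      rw [Finset.sum_congr rfl this]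
      simp [measure_univ]
  -- final inequality
    rw [← hint_gd]
    calc |∫ a, g a ∂π - ∫ a, gd a ∂π| = |∫ a, (g a - gd a) ∂π| := by
          rw [integral_sub hIg hIgd]
      _ ≤ ∫ a, |g a - gd a| ∂π := by
          simpa [Real.norm_eq_abs] using
            norm_integral_le_integral_norm (μ := π) (fun a => g a - gd a)
      _ ≤ ∫ _a, δ ∂π := integral_mono (hIg.sub hIgd).abs (integrable_const δ)
            (fun a => hclose a)
      _ = δ := by simp [measure_univ]

end DCSMC

/-- (Merge step of the D&C SMC consistency argument.) Let `π₁`, `π₂` be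
probability measures. For each `N`, let `(x1 N i, w1 N i)_{i}` and `(x2 N j, w2 N j)_{j}` be
two random weighted particle systems of size `N` (particles in `X₁` resp. `X₂`, weights
nonnegative and summing to one almost surely), independent of each other for each `N`, and
each consistent for `π₁` resp. `π₂` in the sense that weighted indicator sums of any
measurable set converge in probability to its measure. Then for every bounded
product-measurable `f : X₁ × X₂ → ℝ`, the double weighted sums
`∑ᵢ ∑ⱼ w1 N i · w2 N j · f (x1 N i, x2 N j)` converge in probability to `∫ f d(π₁ ⊗ π₂)`. -/
theorem product_particle_system_consistent
    {X₁ X₂ : Type*} [MeasurableSpace X₁] [MeasurableSpace X₂]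
    (π₁ : Measure X₁) (π₂ : Measure X₂)
    [IsProbabilityMeasure π₁] [IsProbabilityMeasure π₂]
    {Ω : Type*} [MeasurableSpace Ω] (P : Measure Ω) [IsProbabilityMeasure P]
    (x1 : (N : ℕ) → Fin N → Ω → X₁) (w1 : (N : ℕ) → Fin N → Ω → ℝ)
    (x2 : (N : ℕ) → Fin N → Ω → X₂) (w2 : (N : ℕ) → Fin N → Ω → ℝ)
    (hx1 : ∀ N i, Measurable (x1 N i)) (hw1 : ∀ N i, Measurable (w1 N i))
    (hx2 : ∀ N j, Measurable (x2 N j)) (hw2 : ∀ N j, Measurable (w2 N j))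
    (hw1_sum : ∀ N, ∀ᵐ ω ∂P, (∀ i, 0 ≤ w1 N i ω) ∧ ∑ i, w1 N i ω = 1)
    (hw2_sum : ∀ N, ∀ᵐ ω ∂P, (∀ j, 0 ≤ w2 N j ω) ∧ ∑ j, w2 N j ω = 1)
    (hindep : ∀ N, IndepFun
      (fun ω => (fun i : Fin N => (x1 N i ω, w1 N i ω)))
      (fun ω => (fun j : Fin N => (x2 N j ω, w2 N j ω))) P)
    (hcons1 : ∀ A : Set X₁, MeasurableSet A →
      TendstoInMeasure P
        (fun N ω => ∑ i, w1 N i ω * Set.indicator A (fun _ => (1 : ℝ)) (x1 N i ω))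
        atTop (fun _ => (π₁ A).toReal))
    (hcons2 : ∀ A : Set X₂, MeasurableSet A →
      TendstoInMeasure P
        (fun N ω => ∑ j, w2 N j ω * Set.indicator A (fun _ => (1 : ℝ)) (x2 N j ω))
        atTop (fun _ => (π₂ A).toReal))
    (f : X₁ × X₂ → ℝ) (hf_meas : Measurable f) (C : ℝ) (hf_bdd : ∀ p, |f p| ≤ C) :
    TendstoInMeasure P
      (fun N ω => ∑ i, ∑ j, w1 N i ω * w2 N j ω * f (x1 N i ω, x2 N j ω))
      atTop (fun _ => ∫ p, f p ∂(π₁.prod π₂)) := by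
  classical
  set C0 : ℝ := max C 0 with hC0def
  have hC0 : 0 ≤ C0 := le_max_right _ _
  have hfb0 : ∀ p, |f p| ≤ C0 := fun p => (hf_bdd p).trans (le_max_left _ _)
  -- the conditional expectation of f given the first coordinate
  set φ : X₁ → ℝ := fun a => ∫ y, f (a, y) ∂π₂ with hφdef
  have hφm : Measurable φ :=
    hf_meas.stronglyMeasurable.integral_prod_right'.measurable
  have hφb : ∀ a, |φ a| ≤ C0 := by
    intro a
    have hn := norm_integral_le_of_norm_le_const (μ := π₂) (C := C0)
      (f := fun y => f (a, y))
      (Filter.Eventually.of_forall fun y => by rw [Real.norm_eq_abs]; exact hfb0 (a, y))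
    rw [Real.norm_eq_abs] at hn
    simp only [hφdef]
    simpa using hn
  have hfint : Integrable f (π₁.prod π₂) :=
    (integrable_const C0).mono' hf_meas.aestronglyMeasurable
      (Filter.Eventually.of_forall fun p => by simpa [Real.norm_eq_abs] using hfb0 p)
  have hlimit : ∫ p, f p ∂(π₁.prod π₂) = ∫ a, φ a ∂π₁ := by
    rw [MeasureTheory.integral_prod _ hfint]
  -- Part U: the outer average of φ converges
  have hU : TendstoInMeasure P (fun N ω => ∑ i, w1 N i ω * φ (x1 N i ω)) atTop
      (fun _ => ∫ a, φ a ∂π₁) :=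
    DCSMC.weighted_tendsto π₁ P x1 w1 hw1_sum hcons1 φ hφm C0 hC0 hφb
  -- a.e. uniform bound on inner sums and deviations
  have hSb : ∀ N, ∀ᵐ ω ∂P, ∀ a, |∑ j, w2 N j ω * f (a, x2 N j ω)| ≤ C0 := by
    intro N
    filter_upwards [hw2_sum N] with ω hω a
    calc |∑ j, w2 N j ω * f (a, x2 N j ω)|
        ≤ ∑ j, |w2 N j ω * f (a, x2 N j ω)| := Finset.abs_sum_le_sum_abs _ _
      _ ≤ ∑ j, w2 N j ω * C0 := by
          refine Finset.sum_le_sum fun j _ => ?_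
          rw [abs_mul, abs_of_nonneg (hω.1 j)]
          exact mul_le_mul_of_nonneg_left (hfb0 _) (hω.1 j)
      _ = C0 := by rw [← Finset.sum_mul, hω.2, one_mul]
  have hDball : ∀ N, ∀ᵐ ω ∂P, ∀ a,
      |(∑ j, w2 N j ω * f (a, x2 N j ω)) - φ a| ≤ 2*C0 := by
    intro N
    filter_upwards [hSb N] with ω hω a
    have h2 := hφb a
    have h3 := abs_sub_le (∑ j, w2 N j ω * f (a, x2 N j ω)) 0 (φ a)
    simp only [sub_zero, zero_sub, abs_neg] at h3
    linarith [hω a]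
  -- measurability of the deviation in both variables
  have hDm : ∀ N, Measurable (fun q : X₁ × Ω =>
      (∑ j, w2 N j q.2 * f (q.1, x2 N j q.2)) - φ q.1) := by
    intro N
    refine Measurable.sub ?_ (hφm.comp measurable_fst)
    refine Finset.measurable_sum _ fun j _ => ?_
    exact ((hw2 N j).comp measurable_snd).mul
      (hf_meas.comp (measurable_fst.prodMk ((hx2 N j).comp measurable_snd)))
  -- truncated deviations are integrable
  have hDtint : ∀ N (a : X₁), Integrable
      (fun ω => min (2*C0) |(∑ j, w2 N j ω * f (a, x2 N j ω)) - φ a|) P := by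
    intro N a
    refine (integrable_const (2*C0)).mono'
      ((measurable_const.min ((hDm N).comp measurable_prodMk_left).abs).aestronglyMeasurable)
      (Filter.Eventually.of_forall fun ω => ?_)
    rw [Real.norm_eq_abs, abs_of_nonneg (le_min (by positivity) (abs_nonneg _))]
    exact min_le_left _ _
  -- ψ: the mean truncated deviation
  set ψ : ℕ → X₁ → ℝ := fun N a =>
    ∫ ω, min (2*C0) |(∑ j, w2 N j ω * f (a, x2 N j ω)) - φ a| ∂P with hψdef
  have hψm : ∀ N, Measurable (ψ N) := by
    intro N
    have hm : Measurable (fun q : X₁ × Ω =>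
        min (2*C0) |(∑ j, w2 N j q.2 * f (q.1, x2 N j q.2)) - φ q.1|) :=
      measurable_const.min (hDm N).abs
    exact hm.stronglyMeasurable.integral_prod_right'.measurable
  have hψ_nonneg : ∀ N a, 0 ≤ ψ N a := fun N a =>
    integral_nonneg fun ω => le_min (by positivity) (abs_nonneg _)
  have hψ_le : ∀ N a, ψ N a ≤ 2*C0 := by
    intro N a
    calc ψ N a ≤ ∫ _ω, (2*C0) ∂P :=
          integral_mono (hDtint N a) (integrable_const _) (fun ω => min_le_left _ _)
      _ = 2*C0 := by simp
  have hψ_tendsto : ∀ a, Tendsto (fun N => ψ N a) atTop (𝓝 0) := by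
    intro a
    have htim : TendstoInMeasure P (fun N ω => ∑ j, w2 N j ω * f (a, x2 N j ω)) atTop
        (fun _ => φ a) :=
      DCSMC.weighted_tendsto π₂ P x2 w2 hw2_sum hcons2 (fun y => f (a, y))
        (hf_meas.comp measurable_prodMk_left) C0 hC0 (fun y => hfb0 (a, y))
    have hsm : ∀ N, AEStronglyMeasurable (fun ω => ∑ j, w2 N j ω * f (a, x2 N j ω)) P := by
      intro N
      exact (Finset.measurable_sum _ fun j _ => (hw2 N j).mul
        (hf_meas.comp (measurable_const.prodMk (hx2 N j)))).aestronglyMeasurable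
    have hb : ∀ N, ∀ᵐ ω ∂P, |∑ j, w2 N j ω * f (a, x2 N j ω)| ≤ C0 := by
      intro N; filter_upwards [hSb N] with ω hω using hω a
    have habs := DCSMC.integral_abs_tendsto_zero (P := P) hsm hb htim
    refine squeeze_zero (fun N => hψ_nonneg N a) (fun N => ?_) habs
    have hint2 : Integrable (fun ω => |(∑ j, w2 N j ω * f (a, x2 N j ω)) - φ a|) P := by
      refine (integrable_const (2*C0)).mono'
        (((hDm N).comp measurable_prodMk_left).abs).aestronglyMeasurable ?_
      filter_upwards [hDball N] with ω hω
      rw [Real.norm_eq_abs, abs_abs]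
      exact hω a
    exact integral_mono (hDtint N a) hint2 (fun ω => min_le_right _ _)
  -- the deviation part T and its properties
  have hTmeas : ∀ N, Measurable (fun ω => ∑ i, w1 N i ω *
      ((∑ j, w2 N j ω * f (x1 N i ω, x2 N j ω)) - φ (x1 N i ω))) := by
    intro N
    refine Finset.measurable_sum _ fun i _ => (hw1 N i).mul ?_
    exact (hDm N).comp ((hx1 N i).prodMk measurable_id)
  have hTb : ∀ N, ∀ᵐ ω ∂P, |∑ i, w1 N i ω *
      ((∑ j, w2 N j ω * f (x1 N i ω, x2 N j ω)) - φ (x1 N i ω))| ≤ 2*C0 := by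
    intro N
    filter_upwards [hw1_sum N, hDball N] with ω h1 h2
    calc |∑ i, w1 N i ω * ((∑ j, w2 N j ω * f (x1 N i ω, x2 N j ω)) - φ (x1 N i ω))|
        ≤ ∑ i, |w1 N i ω * ((∑ j, w2 N j ω * f (x1 N i ω, x2 N j ω)) - φ (x1 N i ω))| :=
          Finset.abs_sum_le_sum_abs _ _
      _ ≤ ∑ i, w1 N i ω * (2*C0) := by
          refine Finset.sum_le_sum fun i _ => ?_
          rw [abs_mul, abs_of_nonneg (h1.1 i)]
          exact mul_le_mul_of_nonneg_left (h2 _) (h1.1 i)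
      _ = 2*C0 := by rw [← Finset.sum_mul, h1.2, one_mul]
  have hTint : ∀ N, Integrable (fun ω => ∑ i, w1 N i ω *
      ((∑ j, w2 N j ω * f (x1 N i ω, x2 N j ω)) - φ (x1 N i ω))) P := by
    intro N
    refine (integrable_const (2*C0)).mono' (hTmeas N).aestronglyMeasurable ?_
    filter_upwards [hTb N] with ω hω
    rwa [Real.norm_eq_abs]
  -- key Fubini bound : E|T_N| ≤ A N
  have hTA : ∀ N, ∫ ω, |∑ i, w1 N i ω *
        ((∑ j, w2 N j ω * f (x1 N i ω, x2 N j ω)) - φ (x1 N i ω))| ∂P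
      ≤ ∫ ω, (∑ i, min |w1 N i ω| 1 * ψ N (x1 N i ω)) ∂P := by
    intro N
    -- measurability of the bounding functional
    have hGm : Measurable (fun q : (Fin N → X₁ × ℝ) × (Fin N → X₂ × ℝ) =>
        ∑ i, min |(q.1 i).2| 1 * min (2*C0)
          |(∑ j, (q.2 j).2 * f ((q.1 i).1, (q.2 j).1)) - φ ((q.1 i).1)|) := by
      refine Finset.measurable_sum _ fun i _ => Measurable.mul ?_ ?_
      · exact (((measurable_pi_apply i).comp measurable_fst).snd.abs).min measurable_const
      · refine measurable_const.min (Measurable.abs (Measurable.sub ?_ ?_))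
        · refine Finset.measurable_sum _ fun j _ => Measurable.mul ?_ ?_
          · exact ((measurable_pi_apply j).comp measurable_snd).snd
          · exact hf_meas.comp ((((measurable_pi_apply i).comp measurable_fst).fst).prodMk
              (((measurable_pi_apply j).comp measurable_snd).fst))
        · exact hφm.comp (((measurable_pi_apply i).comp measurable_fst).fst)
    have hGb : ∀ (y : Fin N → X₁ × ℝ) (z : Fin N → X₂ × ℝ),
        abs (∑ i, min |(y i).2| 1 * min (2*C0)
          |(∑ j, (z j).2 * f ((y i).1, (z j).1)) - φ ((y i).1)|) ≤ (N:ℝ) * (2*C0) := by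
      intro y z
      refine (Finset.abs_sum_le_sum_abs _ _).trans ?_
      have hterm : ∀ i : Fin N, abs (min |(y i).2| 1 * min (2*C0)
          |(∑ j, (z j).2 * f ((y i).1, (z j).1)) - φ ((y i).1)|) ≤ 2*C0 := by
        intro i
        rw [abs_mul]
        have h1 : abs (min |(y i).2| 1) ≤ 1 := by
          rw [abs_of_nonneg (le_min (abs_nonneg _) zero_le_one)]
          exact min_le_right _ _
        have h2 : abs (min (2*C0)
            |(∑ j, (z j).2 * f ((y i).1, (z j).1)) - φ ((y i).1)|) ≤ 2*C0 := by
          rw [abs_of_nonneg (le_min (by positivity) (abs_nonneg _))]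
          exact min_le_left _ _
        have h3 := mul_le_mul h1 h2 (abs_nonneg _) zero_le_one
        linarith
      calc ∑ i, abs (min |(y i).2| 1 * min (2*C0)
              |(∑ j, (z j).2 * f ((y i).1, (z j).1)) - φ ((y i).1)|)
          ≤ ∑ _i : Fin N, (2*C0) := Finset.sum_le_sum (fun i _ => hterm i)
        _ = (N:ℝ) * (2*C0) := by
            rw [Finset.sum_const, Finset.card_univ, Fintype.card_fin, nsmul_eq_mul]
    have hYm : Measurable (fun ω => (fun i : Fin N => (x1 N i ω, w1 N i ω))) :=
      measurable_pi_lambda _ fun i => (hx1 N i).prodMk (hw1 N i)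
    have hZm : Measurable (fun ω => (fun j : Fin N => (x2 N j ω, w2 N j ω))) :=
      measurable_pi_lambda _ fun j => (hx2 N j).prodMk (hw2 N j)
    have key : (∫ ω, (∑ i, min |w1 N i ω| 1 * min (2*C0)
          |(∑ j, w2 N j ω * f (x1 N i ω, x2 N j ω)) - φ (x1 N i ω)|) ∂P)
        = ∫ ω, (∫ ω', ∑ i, min |w1 N i ω| 1 * min (2*C0)
          |(∑ j, w2 N j ω' * f (x1 N i ω, x2 N j ω')) - φ (x1 N i ω)| ∂P) ∂P :=
      DCSMC.fubini_swap P hYm hZm (hindep N)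
        (G := fun y z => ∑ i, min |(y i).2| 1 * min (2*C0)
          |(∑ j, (z j).2 * f ((y i).1, (z j).1)) - φ ((y i).1)|) hGm hGb
    -- compute the inner integral
    have hinner : ∀ ω, (∫ ω', ∑ i, min |w1 N i ω| 1 * min (2*C0)
          |(∑ j, w2 N j ω' * f (x1 N i ω, x2 N j ω')) - φ (x1 N i ω)| ∂P)
        = ∑ i, min |w1 N i ω| 1 * ψ N (x1 N i ω) := by
      intro ω
      rw [integral_finset_sum _ (fun i _ => (hDtint N (x1 N i ω)).const_mul _)]
      refine Finset.sum_congr rfl fun i _ => ?_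
      rw [integral_const_mul]
    -- the pointwise bound |T| ≤ G(Y,Z)
    have hmono : ∫ ω, |∑ i, w1 N i ω *
          ((∑ j, w2 N j ω * f (x1 N i ω, x2 N j ω)) - φ (x1 N i ω))| ∂P
        ≤ ∫ ω, (∑ i, min |w1 N i ω| 1 * min (2*C0)
          |(∑ j, w2 N j ω * f (x1 N i ω, x2 N j ω)) - φ (x1 N i ω)|) ∂P := by
      have hGcint : Integrable (fun ω => ∑ i, min |w1 N i ω| 1 * min (2*C0)
          |(∑ j, w2 N j ω * f (x1 N i ω, x2 N j ω)) - φ (x1 N i ω)|) P := by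
        refine (integrable_const ((N:ℝ) * (2*C0))).mono' ?_ ?_
        · refine (Finset.measurable_sum _ fun i _ => Measurable.mul ?_ ?_).aestronglyMeasurable
          · exact ((hw1 N i).abs).min measurable_const
          · exact measurable_const.min
              ((hDm N).comp ((hx1 N i).prodMk measurable_id)).abs
        · refine Filter.Eventually.of_forall fun ω => ?_
          rw [Real.norm_eq_abs]
          exact hGb (fun i => (x1 N i ω, w1 N i ω)) (fun j => (x2 N j ω, w2 N j ω))
      refine integral_mono_ae (hTint N).abs hGcint ?_
      filter_upwards [hw1_sum N, hDball N] with ω h1 h2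
      calc |∑ i, w1 N i ω * ((∑ j, w2 N j ω * f (x1 N i ω, x2 N j ω)) - φ (x1 N i ω))|
          ≤ ∑ i, |w1 N i ω * ((∑ j, w2 N j ω * f (x1 N i ω, x2 N j ω)) - φ (x1 N i ω))| :=
            Finset.abs_sum_le_sum_abs _ _
        _ ≤ ∑ i, min |w1 N i ω| 1 * min (2*C0)
              |(∑ j, w2 N j ω * f (x1 N i ω, x2 N j ω)) - φ (x1 N i ω)| := by
            refine Finset.sum_le_sum fun i _ => ?_
            have hw : min |w1 N i ω| 1 = |w1 N i ω| := by
              refine min_eq_left ?_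
              rw [abs_of_nonneg (h1.1 i)]
              exact (Finset.single_le_sum (fun i _ => h1.1 i) (Finset.mem_univ i)).trans
                h1.2.le
            have hd : min (2*C0)
                |(∑ j, w2 N j ω * f (x1 N i ω, x2 N j ω)) - φ (x1 N i ω)|
                = |(∑ j, w2 N j ω * f (x1 N i ω, x2 N j ω)) - φ (x1 N i ω)| :=
              min_eq_right (h2 _)
            rw [abs_mul, hw, hd]
    calc ∫ ω, |∑ i, w1 N i ω *
            ((∑ j, w2 N j ω * f (x1 N i ω, x2 N j ω)) - φ (x1 N i ω))| ∂P
        ≤ ∫ ω, (∑ i, min |w1 N i ω| 1 * min (2*C0)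
            |(∑ j, w2 N j ω * f (x1 N i ω, x2 N j ω)) - φ (x1 N i ω)|) ∂P := hmono
      _ = ∫ ω, (∫ ω', ∑ i, min |w1 N i ω| 1 * min (2*C0)
            |(∑ j, w2 N j ω' * f (x1 N i ω, x2 N j ω')) - φ (x1 N i ω)| ∂P) ∂P := key
      _ = ∫ ω, (∑ i, min |w1 N i ω| 1 * ψ N (x1 N i ω)) ∂P :=
          integral_congr_ae (Filter.Eventually.of_forall fun ω => hinner ω)
  -- convergence of A N to zero via the monotone truncation sets
  have hAA0 : Tendsto (fun N => ∫ ω, (∑ i, min |w1 N i ω| 1 * ψ N (x1 N i ω)) ∂P)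
      atTop (𝓝 0) := by
    rw [Metric.tendsto_atTop]
    intro ε hε
    have hηpos : 0 < ε/4 := by linarith
    set B : ℕ → Set X₁ := fun k => ⋃ (m : ℕ) (_ : k ≤ m), {a | ε/4 < ψ m a} with hB
    have hBmeas : ∀ k, MeasurableSet (B k) := fun k =>
      MeasurableSet.iUnion fun m => MeasurableSet.iUnion fun _ =>
        measurableSet_lt measurable_const (hψm m)
    have hBanti : Antitone B := by
      intro k k' hkk' a ha
      simp only [hB, Set.mem_iUnion, Set.mem_setOf_eq] at ha ⊢
      obtain ⟨m, hm, hma⟩ := ha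
      exact ⟨m, le_trans hkk' hm, hma⟩
    have hBempty : ⋂ k, B k = ∅ := by
      ext a
      simp only [hB, Set.mem_iInter, Set.mem_iUnion, Set.mem_setOf_eq,
        Set.mem_empty_iff_false, iff_false, not_forall, not_exists, not_lt]
      obtain ⟨K, hK⟩ := (Metric.tendsto_atTop.mp (hψ_tendsto a)) (ε/4) hηpos
      refine ⟨K, fun m hm => ?_⟩
      have := hK m hm
      rw [Real.dist_eq, sub_zero, abs_of_nonneg (hψ_nonneg m a)] at this
      linarith
    have hμB : Tendsto (fun k => π₁ (B k)) atTop (𝓝 0) := by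
      have h0 := tendsto_measure_iInter_atTop (μ := π₁)
        (fun k => (hBmeas k).nullMeasurableSet) hBanti ⟨0, measure_ne_top _ _⟩
      rw [hBempty] at h0
      simpa [Function.comp_def] using h0
    have hcpos : 0 < ε / (8 * (C0 + 1)) := by positivity
    obtain ⟨k₀, hk₀⟩ := (ENNReal.tendsto_atTop_zero.mp hμB)
      (ENNReal.ofReal (ε / (8*(C0+1)))) (by simp [ENNReal.ofReal_pos, hcpos])
    have hπB : (π₁ (B k₀)).toReal ≤ ε / (8*(C0+1)) := by
      have h1 := hk₀ k₀ le_rfl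
      calc (π₁ (B k₀)).toReal ≤ (ENNReal.ofReal (ε / (8*(C0+1)))).toReal :=
            ENNReal.toReal_mono ENNReal.ofReal_ne_top h1
        _ = ε/(8*(C0+1)) := ENNReal.toReal_ofReal hcpos.le
    -- convergence of the weighted indicator integrals
    have hrtend : Tendsto (fun N => ∫ ω, (∑ i, w1 N i ω *
        Set.indicator (B k₀) (fun _ => (1:ℝ)) (x1 N i ω)) ∂P) atTop
        (𝓝 (π₁ (B k₀)).toReal) := by
      refine DCSMC.integral_tendsto_of_tim (C' := 1) (fun N => ?_) (fun N => ?_)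
        (hcons1 (B k₀) (hBmeas k₀))
      · exact (Finset.measurable_sum _ fun i _ => (hw1 N i).mul
          ((measurable_const.indicator (hBmeas k₀)).comp (hx1 N i))).aestronglyMeasurable
      · filter_upwards [hw1_sum N] with ω hω
        have hub : ∀ i : Fin N, w1 N i ω * Set.indicator (B k₀) (fun _ => (1:ℝ)) (x1 N i ω)
            ≤ w1 N i ω * 1 := fun i => mul_le_mul_of_nonneg_left
              (Set.indicator_le_self' (fun _ _ => zero_le_one) _) (hω.1 i)
        have hlb : ∀ i : Fin N, 0 ≤ w1 N i ω * Set.indicator (B k₀) (fun _ => (1:ℝ)) (x1 N i ω) :=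
          fun i => mul_nonneg (hω.1 i) (Set.indicator_nonneg (fun _ _ => zero_le_one) _)
        rw [abs_of_nonneg (Finset.sum_nonneg fun i _ => hlb i)]
        calc ∑ i, w1 N i ω * Set.indicator (B k₀) (fun _ => (1:ℝ)) (x1 N i ω)
            ≤ ∑ i, w1 N i ω * 1 := Finset.sum_le_sum fun i _ => hub i
          _ = 1 := by simp only [mul_one]; exact hω.2
    obtain ⟨K₁, hK₁⟩ := (Metric.tendsto_atTop.mp hrtend) (ε/(8*(C0+1))) hcpos
    refine ⟨max k₀ K₁, fun N hN => ?_⟩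
    have hNk₀ : k₀ ≤ N := le_trans (le_max_left _ _) hN
    have hNK₁ : K₁ ≤ N := le_trans (le_max_right _ _) hN
    -- pointwise bound on ψ N for N ≥ k₀
    have hψb : ∀ a, ψ N a ≤ ε/4 + 2*C0 * Set.indicator (B k₀) (fun _ => (1:ℝ)) a := by
      intro a
      by_cases hcase : ε/4 < ψ N a
      · have ha : a ∈ B k₀ := by
          simp only [hB, Set.mem_iUnion, Set.mem_setOf_eq]
          exact ⟨N, hNk₀, hcase⟩
        rw [Set.indicator_of_mem ha]
        have := hψ_le N a
        linarith
      · push_neg at hcase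
        have hind : 0 ≤ Set.indicator (B k₀) (fun _ => (1:ℝ)) a :=
          Set.indicator_nonneg (fun _ _ => zero_le_one) a
        nlinarith
    -- integrate the bound
    have hSint : Integrable (fun ω => ∑ i, w1 N i ω *
        Set.indicator (B k₀) (fun _ => (1:ℝ)) (x1 N i ω)) P := by
      refine (integrable_const (1:ℝ)).mono'
        ((Finset.measurable_sum _ fun i _ => (hw1 N i).mul
          ((measurable_const.indicator (hBmeas k₀)).comp (hx1 N i))).aestronglyMeasurable) ?_
      filter_upwards [hw1_sum N] with ω hω
      rw [Real.norm_eq_abs]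
      have hub : ∀ i : Fin N, w1 N i ω * Set.indicator (B k₀) (fun _ => (1:ℝ)) (x1 N i ω)
          ≤ w1 N i ω * 1 := fun i => mul_le_mul_of_nonneg_left
            (Set.indicator_le_self' (fun _ _ => zero_le_one) _) (hω.1 i)
      have hlb : ∀ i : Fin N, 0 ≤ w1 N i ω * Set.indicator (B k₀) (fun _ => (1:ℝ)) (x1 N i ω) :=
        fun i => mul_nonneg (hω.1 i) (Set.indicator_nonneg (fun _ _ => zero_le_one) _)
      rw [abs_of_nonneg (Finset.sum_nonneg fun i _ => hlb i)]
      calc ∑ i, w1 N i ω * Set.indicator (B k₀) (fun _ => (1:ℝ)) (x1 N i ω)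
          ≤ ∑ i, w1 N i ω * 1 := Finset.sum_le_sum fun i _ => hub i
        _ = 1 := by simp only [mul_one]; exact hω.2
    have hIl : Integrable (fun ω => ∑ i, min |w1 N i ω| 1 * ψ N (x1 N i ω)) P := by
      refine (integrable_const ((N:ℝ) * (2*C0))).mono'
        ((Finset.measurable_sum _ fun i _ => ((hw1 N i).abs.min measurable_const).mul
          ((hψm N).comp (hx1 N i))).aestronglyMeasurable) ?_
      refine Filter.Eventually.of_forall fun ω => ?_
      rw [Real.norm_eq_abs]
      refine (Finset.abs_sum_le_sum_abs _ _).trans ?_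
      have hterm : ∀ i : Fin N, abs (min |w1 N i ω| 1 * ψ N (x1 N i ω)) ≤ 2*C0 := by
        intro i
        rw [abs_mul, abs_of_nonneg (le_min (abs_nonneg _) zero_le_one),
          abs_of_nonneg (hψ_nonneg N _)]
        have h1 : min |w1 N i ω| 1 ≤ 1 := min_le_right _ _
        have h2 := hψ_le N (x1 N i ω)
        have h0 : 0 ≤ min |w1 N i ω| 1 := le_min (abs_nonneg _) zero_le_one
        nlinarith [hψ_nonneg N (x1 N i ω)]
      calc ∑ i, abs (min |w1 N i ω| 1 * ψ N (x1 N i ω))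
          ≤ ∑ _i : Fin N, (2*C0) := Finset.sum_le_sum fun i _ => hterm i
        _ = (N:ℝ) * (2*C0) := by
            rw [Finset.sum_const, Finset.card_univ, Fintype.card_fin, nsmul_eq_mul]
    have hmono : ∫ ω, (∑ i, min |w1 N i ω| 1 * ψ N (x1 N i ω)) ∂P
        ≤ ∫ ω, (ε/4 + 2*C0 * ∑ i, w1 N i ω *
            Set.indicator (B k₀) (fun _ => (1:ℝ)) (x1 N i ω)) ∂P := by
      refine integral_mono_ae hIl ((integrable_const (ε/4)).add (hSint.const_mul (2*C0))) ?_
      filter_upwards [hw1_sum N] with ω hω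
      have hw_eq : ∀ i : Fin N, min |w1 N i ω| 1 = w1 N i ω := by
        intro i
        rw [abs_of_nonneg (hω.1 i)]
        exact min_eq_left ((Finset.single_le_sum (fun i _ => hω.1 i)
          (Finset.mem_univ i)).trans hω.2.le)
      calc ∑ i, min |w1 N i ω| 1 * ψ N (x1 N i ω)
          = ∑ i, w1 N i ω * ψ N (x1 N i ω) :=
            Finset.sum_congr rfl fun i _ => by rw [hw_eq i]
        _ ≤ ∑ i, w1 N i ω * (ε/4 + 2*C0 *
              Set.indicator (B k₀) (fun _ => (1:ℝ)) (x1 N i ω)) :=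
            Finset.sum_le_sum fun i _ =>
              mul_le_mul_of_nonneg_left (hψb (x1 N i ω)) (hω.1 i)
        _ = ε/4 + 2*C0 * ∑ i, w1 N i ω *
              Set.indicator (B k₀) (fun _ => (1:ℝ)) (x1 N i ω) := by
            rw [Finset.mul_sum]
            have hexp : ∀ i : Fin N, w1 N i ω * (ε/4 + 2*C0 *
                Set.indicator (B k₀) (fun _ => (1:ℝ)) (x1 N i ω))
                = w1 N i ω * (ε/4) + 2*C0 * (w1 N i ω *
                  Set.indicator (B k₀) (fun _ => (1:ℝ)) (x1 N i ω)) := fun i => by ring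
            rw [Finset.sum_congr rfl fun i _ => hexp i, Finset.sum_add_distrib,
              ← Finset.sum_mul, hω.2, one_mul]
    have hrhs : ∫ ω, (ε/4 + 2*C0 * ∑ i, w1 N i ω *
          Set.indicator (B k₀) (fun _ => (1:ℝ)) (x1 N i ω)) ∂P
        = ε/4 + 2*C0 * ∫ ω, (∑ i, w1 N i ω *
          Set.indicator (B k₀) (fun _ => (1:ℝ)) (x1 N i ω)) ∂P := by
      rw [integral_add (integrable_const _) (hSint.const_mul _), integral_const,
        integral_const_mul]
      simp
    -- numeric conclusion
    have hrval := hK₁ N hNK₁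
    rw [Real.dist_eq] at hrval
    have habs := abs_lt.mp hrval
    have hrle : ∫ ω, (∑ i, w1 N i ω *
        Set.indicator (B k₀) (fun _ => (1:ℝ)) (x1 N i ω)) ∂P ≤ ε/(4*(C0+1)) := by
      have h1 : ∫ ω, (∑ i, w1 N i ω *
          Set.indicator (B k₀) (fun _ => (1:ℝ)) (x1 N i ω)) ∂P
          < (π₁ (B k₀)).toReal + ε/(8*(C0+1)) := by linarith [habs.2]
      have hc : (C0:ℝ) + 1 ≠ 0 := by positivity
      have h2 : ε/(8*(C0+1)) + ε/(8*(C0+1)) = ε/(4*(C0+1)) := by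
        field_simp
        ring
      linarith [hπB]
    have hnn : 0 ≤ ∫ ω, (∑ i, min |w1 N i ω| 1 * ψ N (x1 N i ω)) ∂P :=
      integral_nonneg fun ω => Finset.sum_nonneg fun i _ =>
        mul_nonneg (le_min (abs_nonneg _) zero_le_one) (hψ_nonneg N _)
    rw [Real.dist_eq, sub_zero, abs_of_nonneg hnn]
    have hfin : 2*C0 * (ε/(4*(C0+1))) ≤ ε/2 := by
      have hc1 : 0 < 4*(C0+1) := by linarith
      calc 2*C0 * (ε/(4*(C0+1))) = ε * (2*C0/(4*(C0+1))) := by ring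
        _ ≤ ε * (1/2) := by
            refine mul_le_mul_of_nonneg_left ?_ hε.le
            rw [div_le_div_iff₀ hc1 (by norm_num)]
            linarith
        _ = ε/2 := by ring
    have hstep : 2*C0 * ∫ ω, (∑ i, w1 N i ω *
        Set.indicator (B k₀) (fun _ => (1:ℝ)) (x1 N i ω)) ∂P ≤ 2*C0 * (ε/(4*(C0+1))) :=
      mul_le_mul_of_nonneg_left hrle (by linarith)
    calc ∫ ω, (∑ i, min |w1 N i ω| 1 * ψ N (x1 N i ω)) ∂P
        ≤ ε/4 + 2*C0 * ∫ ω, (∑ i, w1 N i ω *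
            Set.indicator (B k₀) (fun _ => (1:ℝ)) (x1 N i ω)) ∂P := by
          rw [← hrhs]; exact hmono
      _ ≤ ε/4 + ε/2 := by linarith
      _ < ε := by linarith
  -- conclude : T tends to zero in measure
  have hTtend : TendstoInMeasure P (fun N ω => ∑ i, w1 N i ω *
      ((∑ j, w2 N j ω * f (x1 N i ω, x2 N j ω)) - φ (x1 N i ω))) atTop (fun _ => (0:ℝ)) := by
    refine DCSMC.tim_of_integral_abs hTint ?_
    refine squeeze_zero (fun N => integral_nonneg fun ω => abs_nonneg _) hTA hAA0
  -- assemble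
  have hfinal := DCSMC.tim_add hTtend hU
  refine TendstoInMeasure.congr (fun N => Filter.Eventually.of_forall fun ω => ?_)
    (Filter.Eventually.of_forall fun ω => ?_) hfinal
  · -- pointwise identity T + U = double sum
    show (∑ i, w1 N i ω * ((∑ j, w2 N j ω * f (x1 N i ω, x2 N j ω)) - φ (x1 N i ω)))
        + (∑ i, w1 N i ω * φ (x1 N i ω))
      = ∑ i, ∑ j, w1 N i ω * w2 N j ω * f (x1 N i ω, x2 N j ω)
    rw [← Finset.sum_add_distrib]
    refine Finset.sum_congr rfl fun i _ => ?_
    have hre : w1 N i ω * ((∑ j, w2 N j ω * f (x1 N i ω, x2 N j ω)) - φ (x1 N i ω))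
        + w1 N i ω * φ (x1 N i ω)
        = w1 N i ω * ∑ j, w2 N j ω * f (x1 N i ω, x2 N j ω) := by ring
    rw [hre, Finset.mul_sum]
    exact Finset.sum_congr rfl fun j _ => (mul_assoc _ _ _).symm
  · show (0:ℝ) + ∫ a, φ a ∂π₁ = ∫ p, f p ∂(π₁.prod π₂)
    rw [zero_add, hlimit]
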